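/- Let d, e ∈ ℝ with (d − e)² + e² ≠ 0, set n = (e, d − e)/√((d − e)² + e²) ∈ ℝ², and let ρ ∈ ℝ. Then [[1 − d, 0], [d − e, 1 − e]] + [[d, 0], [e − d, e]]·(I₂ + (ρ − 1)·n nᵗ) = I₂ + (ρ − 1)·B₁, where B₁ = (1/((d − e)² + e²))·[[de², de(d − e)], [0, 0]]. -/

import Mathlib

noncomputable section

/-- Case 2 interface triangle: with `n = (e, d - e)/√((d-e)² + e²)` one has
`[[1-d, 0], [d-e, 1-e]] + [[d, 0], [e-d, e]] (I₂ + (ρ-1) n nᵗ) = I₂ + (ρ-1) B₁`, where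
`B₁ = (1/((d-e)² + e²)) [[de², de(d-e)], [0, 0]]`. -/
theorem case_two_interpolation_matrix_identity
    (d e : ℝ) (h : (d - e) ^ 2 + e ^ 2 ≠ 0) (ρ : ℝ)
    (n : Fin 2 → ℝ)
    (hn : n = ![e / Real.sqrt ((d - e) ^ 2 + e ^ 2),
                (d - e) / Real.sqrt ((d - e) ^ 2 + e ^ 2)])
    (B₁ : Matrix (Fin 2) (Fin 2) ℝ)
    (hB₁ : B₁ = (1 / ((d - e) ^ 2 + e ^ 2)) • !![d * e ^ 2, d * e * (d - e); 0, 0]) :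
    !![1 - d, 0; d - e, 1 - e] + !![d, 0; e - d, e] * (1 + (ρ - 1) • Matrix.vecMulVec n n) =
      1 + (ρ - 1) • B₁ := by
  have hs : Real.sqrt ((d - e) ^ 2 + e ^ 2) * Real.sqrt ((d - e) ^ 2 + e ^ 2)
      = (d - e) ^ 2 + e ^ 2 :=
    Real.mul_self_sqrt (by positivity)
  have hsne : Real.sqrt ((d - e) ^ 2 + e ^ 2) ≠ 0 := by
    intro h0
    rw [h0, mul_zero] at hs
    exact h hs.symm
  subst hn hB₁
  ext i j
  fin_cases i <;> fin_cases j <;>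
    simp [Matrix.mul_apply, Matrix.vecMulVec_apply, Matrix.one_apply, Matrix.vecMul,
      dotProduct, Fin.sum_univ_two] <;>
    field_simp <;> rw [Real.sq_sqrt (by positivity : (0:ℝ) ≤ (d - e) ^ 2 + e ^ 2)] <;> nlinarith [hs, sq_nonneg (Real.sqrt ((d - e) ^ 2 + e ^ 2))]
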